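/- For every real γ > 1 and even integer t ≥ 2, the univariate polynomial f(x) = (1 + γ(x-1))^t - 1 - γ(x^t - 1) is nonnegative for all x ∈ ℝ. -/

import Mathlib

/-- For `γ > 1` real and `t ≥ 2` even:
`f(x) = (1 + γ(x-1))^t - 1 - γ(x^t - 1)` is nonnegative on `ℝ`. -/
theorem stmt8 (γ : ℝ) (hγ : 1 < γ) (t : ℕ) (ht : 2 ≤ t) (hte : Even t) (x : ℝ) :
    0 ≤ (1 + γ * (x - 1)) ^ t - 1 - γ * (x ^ t - 1) := by
  have hγ0 : (0:ℝ) < γ := by linarith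
  have ha : (0:ℝ) ≤ 1/γ := by positivity
  have hb : (0:ℝ) ≤ 1 - 1/γ := by
    have : 1/γ ≤ 1 := by rw [div_le_one hγ0]; linarith
    linarith
  have hconv := (Even.convexOn_pow hte).2 (Set.mem_univ (1 + γ*(x-1)))
    (Set.mem_univ (1:ℝ)) ha hb (by field_simp; ring)
  have hx : (1/γ) * (1 + γ*(x-1)) + (1 - 1/γ) * 1 = x := by
    field_simp; ring
  simp only [smul_eq_mul, one_pow] at hconv
  rw [hx] at hconv
  have := mul_le_mul_of_nonneg_left hconv hγ0.le
  have hcancel : γ * (1/γ * (1 + γ*(x-1))^t + (1 - 1/γ) * 1) = (1 + γ*(x-1))^t + γ - 1 := by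
    field_simp; ring
  nlinarith [this, hcancel]
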